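/- Fix α ∈ (0,1), μ₀ > 0 with μ₀·(π/2)^{α/(1−α)} ≤ 1/2, t > 0, and unit vectors w₁, w ∈ ℝ^d with θ(w₁, w) ≤ 6.5·t. Let η be the constructed label function η(x) = 1/2 + sgn(⟨w,x⟩)·℘(|φ(x,w)|) if |φ(x,w₁)| ≤ 6.5·t, and η(x) = 1/2 + sgn(⟨w₁,x⟩)·℘(|φ(x,w₁)|) if |φ(x,w₁)| > 6.5·t. Then η satisfies the Tsybakov noise condition with respect to w: for every nonzero x ∈ ℝ^d, μ₀·|φ(x,w)|^{α/(1−α)} ≤ |η(x) − 1/2|. -/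

import Mathlib

open scoped RealInnerProductSpace

/-- The signed margin angle `φ(x,w) = π/2 − θ(x,w)`. -/
noncomputable def phi {d : ℕ} (x w : EuclideanSpace ℝ (Fin d)) : ℝ :=
  Real.pi / 2 - InnerProductGeometry.angle x w

/-- `℘(ϑ) = min{2^{α/(1−α)}·μ₀·ϑ^{α/(1−α)}, 1/2}`. -/
noncomputable def wp (α μ₀ ϑ : ℝ) : ℝ :=
  min ((2 : ℝ) ^ (α / (1 - α)) * μ₀ * ϑ ^ (α / (1 - α))) (1 / 2)

/-- The constructed label function `η` relative to the reference hypothesis `w₁`. -/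
noncomputable def eta {d : ℕ} (α μ₀ t : ℝ) (w₁ w : EuclideanSpace ℝ (Fin d))
    (x : EuclideanSpace ℝ (Fin d)) : ℝ :=
  if |phi x w₁| ≤ 6.5 * t then 1 / 2 + Real.sign ⟪w, x⟫ * wp α μ₀ |phi x w|
  else 1 / 2 + Real.sign ⟪w₁, x⟫ * wp α μ₀ |phi x w₁|

section AuxTriangle

open InnerProductGeometry Real

variable {V : Type*} [NormedAddCommGroup V] [InnerProductSpace ℝ V]

lemma angle_triangle_unit (x y z : V) (hx : ‖x‖ = 1) (hy : ‖y‖ = 1) (hz : ‖z‖ = 1) :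
    angle x z ≤ angle x y + angle y z := by
  set a := angle x y with ha
  set b := angle y z with hb
  have ha0 : 0 ≤ a := angle_nonneg x y
  have hb0 : 0 ≤ b := angle_nonneg y z
  have haπ : a ≤ π := angle_le_pi x y
  have hbπ : b ≤ π := angle_le_pi y z
  by_cases hab : π ≤ a + b
  · exact (angle_le_pi x z).trans hab
  push_neg at hab
  have hxy : ⟪x, y⟫ = Real.cos a := by
    have := cos_angle x y; rw [hx, hy] at this; simpa using this.symm
  have hyz : ⟪y, z⟫ = Real.cos b := by
    have := cos_angle y z; rw [hy, hz] at this; simpa using this.symm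
  have hxz : Real.cos (angle x z) = ⟪x, z⟫ := by
    have := cos_angle x z; rw [hx, hz] at this; simpa using this
  have hyx : ⟪y, x⟫ = Real.cos a := by rw [real_inner_comm]; exact hxy
  have hzy : ⟪z, y⟫ = Real.cos b := by rw [real_inner_comm]; exact hyz
  set x' : V := x - ⟪x, y⟫ • y with hx'
  set z' : V := z - ⟪z, y⟫ • y with hz'
  have hyy : ⟪y, y⟫ = (1 : ℝ) := by
    rw [real_inner_self_eq_norm_sq, hy]; norm_num
  have hinner : ⟪x', z'⟫ = ⟪x, z⟫ - ⟪x, y⟫ * ⟪z, y⟫ := by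
    simp only [hx', hz', inner_sub_left, inner_sub_right, real_inner_smul_left,
      real_inner_smul_right, hyy, real_inner_comm y z]
    ring
  have hnx' : ‖x'‖ ^ 2 = Real.sin a ^ 2 := by
    rw [← real_inner_self_eq_norm_sq]
    have hxx : ⟪x, x⟫ = (1 : ℝ) := by rw [real_inner_self_eq_norm_sq, hx]; norm_num
    simp only [hx', inner_sub_left, inner_sub_right, real_inner_smul_left,
      real_inner_smul_right, hyy, hyx, hxx, hxy]
    nlinarith [Real.sin_sq_add_cos_sq a]
  have hnz' : ‖z'‖ ^ 2 = Real.sin b ^ 2 := by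
    rw [← real_inner_self_eq_norm_sq]
    have hzz : ⟪z, z⟫ = (1 : ℝ) := by rw [real_inner_self_eq_norm_sq, hz]; norm_num
    simp only [hz', inner_sub_left, inner_sub_right, real_inner_smul_left,
      real_inner_smul_right, hyy, hzy, hzz, hyz]
    nlinarith [Real.sin_sq_add_cos_sq b]
  have hsina : 0 ≤ Real.sin a := Real.sin_nonneg_of_nonneg_of_le_pi ha0 haπ
  have hsinb : 0 ≤ Real.sin b := Real.sin_nonneg_of_nonneg_of_le_pi hb0 hbπ
  have hnx : ‖x'‖ = Real.sin a := by
    rw [← Real.sqrt_sq (norm_nonneg x'), hnx', Real.sqrt_sq hsina]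
  have hnz : ‖z'‖ = Real.sin b := by
    rw [← Real.sqrt_sq (norm_nonneg z'), hnz', Real.sqrt_sq hsinb]
  have hcs : -(Real.sin a * Real.sin b) ≤ ⟪x', z'⟫ := by
    have := neg_abs_le (⟪x', z'⟫ : ℝ)
    have h2 := abs_real_inner_le_norm x' z'
    rw [hnx, hnz] at h2
    linarith
  have hge : Real.cos (a + b) ≤ ⟪x, z⟫ := by
    rw [Real.cos_add]
    have : ⟪x, z⟫ = Real.cos a * Real.cos b + ⟪x', z'⟫ := by
      rw [hinner, hxy, hzy]; ring
    linarith
  by_contra h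
  push_neg at h
  have := Real.strictAntiOn_cos ⟨by linarith, hab.le⟩
    ⟨angle_nonneg x z, angle_le_pi x z⟩ h
  rw [hxz] at this
  linarith

lemma abs_angle_sub_le (x y z : V) (hy : ‖y‖ = 1) (hz : ‖z‖ = 1) (hx : x ≠ 0) :
    |angle x y - angle x z| ≤ angle y z := by
  set u : V := ‖x‖⁻¹ • x with hu
  have hxn : (0:ℝ) < ‖x‖ := norm_pos_iff.mpr hx
  have hun : ‖u‖ = 1 := by
    rw [hu, norm_smul, norm_inv, norm_norm, inv_mul_cancel₀ hxn.ne']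
  have h1 : angle u y = angle x y := angle_smul_left_of_pos x y (by positivity)
  have h2 : angle u z = angle x z := angle_smul_left_of_pos x z (by positivity)
  have t1 := angle_triangle_unit u y z hun hy hz
  have t2 := angle_triangle_unit u z y hun hz hy
  rw [angle_comm z y] at t2
  rw [abs_le]
  constructor <;> [linarith [h1, h2, t2]; linarith [h1, h2, t1]]


/-- The constructed label function `η` satisfies the Tsybakov noise condition with respect
to `w`: for every nonzero `x`, `μ₀·|φ(x,w)|^{α/(1−α)} ≤ |η(x) − 1/2|`. -/
theorem stmt_11 (d : ℕ) (α μ₀ t : ℝ) (hα : 0 < α) (hα' : α < 1) (hμ : 0 < μ₀)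
    (hμ' : μ₀ * (Real.pi / 2) ^ (α / (1 - α)) ≤ 1 / 2) (ht : 0 < t)
    (w₁ w : EuclideanSpace ℝ (Fin d)) (hw₁ : ‖w₁‖ = 1) (hw : ‖w‖ = 1)
    (hangle : InnerProductGeometry.angle w₁ w ≤ 6.5 * t) :
    ∀ x : EuclideanSpace ℝ (Fin d), x ≠ 0 →
      μ₀ * |phi x w| ^ (α / (1 - α)) ≤ |eta α μ₀ t w₁ w x - 1 / 2| := by
  intro x hx
  set β := α / (1 - α) with hβ
  have hβ0 : 0 < β := div_pos hα (by linarith)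
  -- general bounds on |phi|
  have hphile : ∀ v : EuclideanSpace ℝ (Fin d), |phi x v| ≤ π / 2 := by
    intro v
    have h1 := angle_nonneg x v
    have h2 := angle_le_pi x v
    rw [abs_le, phi]
    constructor <;> linarith
  have hhalf : ∀ v : EuclideanSpace ℝ (Fin d), μ₀ * |phi x v| ^ β ≤ 1 / 2 := by
    intro v
    refine le_trans ?_ hμ'
    have := Real.rpow_le_rpow (abs_nonneg (phi x v)) (hphile v) hβ0.le
    nlinarith
  have htwo : (1 : ℝ) ≤ (2 : ℝ) ^ β := Real.one_le_rpow (by norm_num) hβ0.le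
  have hwpnn : ∀ ϑ : ℝ, 0 ≤ ϑ → 0 ≤ wp α μ₀ ϑ := by
    intro ϑ hϑ
    refine le_min (by positivity) (by norm_num)
  -- key: abs of sign times wp
  have hsignwp : ∀ (s : ℝ), s ≠ 0 → ∀ ϑ : ℝ, 0 ≤ ϑ →
      |Real.sign s * wp α μ₀ ϑ| = wp α μ₀ ϑ := by
    intro s hs ϑ hϑ
    rcases hs.lt_or_gt with h | h
    · rw [Real.sign_of_neg h]; rw [abs_mul, abs_neg, abs_one, one_mul,
        abs_of_nonneg (hwpnn ϑ hϑ)]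
    · rw [Real.sign_of_pos h]; rw [abs_mul, abs_one, one_mul, abs_of_nonneg (hwpnn ϑ hϑ)]
  rw [eta]
  split_ifs with hcase
  · -- case |phi x w₁| ≤ 6.5 t : label uses w itself
    by_cases hz : ⟪w, x⟫ = (0 : ℝ)
    · have hphi0 : phi x w = 0 := by
        have : InnerProductGeometry.angle x w = π / 2 := by
          rw [angle_comm]
          exact (inner_eq_zero_iff_angle_eq_pi_div_two w x).mp hz
        rw [phi, this, sub_self]
      rw [hphi0]
      simp [Real.zero_rpow hβ0.ne', abs_nonneg]
      positivity
    · rw [add_sub_cancel_left, hsignwp _ hz _ (abs_nonneg _), wp]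
      simp only [← hβ]
      refine le_min ?_ (hhalf w)
      have h1 : 0 ≤ |phi x w| ^ β := Real.rpow_nonneg (abs_nonneg _) _
      nlinarith [mul_nonneg (mul_nonneg (sub_nonneg.mpr htwo) hμ.le) h1]
  · -- case |phi x w₁| > 6.5 t : label uses w₁
    push_neg at hcase
    have hphi1pos : 0 < |phi x w₁| := lt_trans (by positivity) hcase
    have hz : ⟪w₁, x⟫ ≠ (0 : ℝ) := by
      intro hz
      have : InnerProductGeometry.angle x w₁ = π / 2 := by
        rw [angle_comm]
        exact (inner_eq_zero_iff_angle_eq_pi_div_two w₁ x).mp hz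
      rw [phi, this, sub_self, abs_zero] at hphi1pos
      exact lt_irrefl 0 hphi1pos
    rw [add_sub_cancel_left, hsignwp _ hz _ (abs_nonneg _), wp]
    simp only [← hβ]
    refine le_min ?_ (hhalf w)
    -- |phi x w| ≤ 2 |phi x w₁|
    have hdiff : |InnerProductGeometry.angle x w₁ - InnerProductGeometry.angle x w|
        ≤ InnerProductGeometry.angle w₁ w := abs_angle_sub_le x w₁ w hw₁ hw hx
    have hle : |phi x w| ≤ 2 * |phi x w₁| := by
      have h1 : |phi x w - phi x w₁| ≤ 6.5 * t := by
        have : phi x w - phi x w₁ =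
            InnerProductGeometry.angle x w₁ - InnerProductGeometry.angle x w := by
          rw [phi, phi]; ring
        rw [this]
        exact hdiff.trans hangle
      have h2 := abs_sub_abs_le_abs_sub (phi x w) (phi x w₁)
      linarith
    have h3 : |phi x w| ^ β ≤ (2 * |phi x w₁|) ^ β :=
      Real.rpow_le_rpow (abs_nonneg _) hle hβ0.le
    have h4 : (2 * |phi x w₁|) ^ β = (2 : ℝ) ^ β * |phi x w₁| ^ β :=
      Real.mul_rpow (by norm_num) (abs_nonneg _)
    rw [h4] at h3
    calc μ₀ * |phi x w| ^ β ≤ μ₀ * ((2:ℝ) ^ β * |phi x w₁| ^ β) := by nlinarith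
      _ = (2:ℝ) ^ β * μ₀ * |phi x w₁| ^ β := by ring

end AuxTriangle
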